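/- Davis–Jedwab Golay pair construction (binary case): Let m ≥ 2, π a permutation of {0,...,m-1}, and c_0,...,c_{m-1}, c ∈ Z_2. Define f : {0,1}^m → Z_2 by f(y) = sum_{α=0}^{m-2} y_{π(α)} y_{π(α+1)} + sum_{α=0}^{m-1} c_α y_α + c. Then the length-2^m sequences a, b defined by a_i = (-1)^{f(i_0,...,i_{m-1})} and b_i = (-1)^{f(i_0,...,i_{m-1}) + i_{π(0)}} form a Golay complementary pair: A(a)(s) + A(b)(s) = 0 for all s ≠ 0. -/

import Mathlib

open Finset Complex

/-- Extension of a length-`N` sequence to `ℤ` by zero outside `[0, N)`. -/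
noncomputable def extSeq (N : ℕ) (d : ℕ → ℂ) : ℤ → ℂ :=
  fun i => if 0 ≤ i ∧ i < (N : ℤ) then d i.toNat else 0

/-- Aperiodic cross-correlation of length-`N` complex sequences at integer shift `s`. -/
noncomputable def acorr (N : ℕ) (d e : ℕ → ℂ) (s : ℤ) : ℂ :=
  ∑ k ∈ Finset.range N, extSeq N d k * (starRingEnd ℂ) (extSeq N e (k + s))

/-- Aperiodic autocorrelation. -/
noncomputable def aauto (N : ℕ) (e : ℕ → ℂ) (s : ℤ) : ℂ := acorr N e e s

/-- Golay complementary pair of length `N`. -/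
def IsGCP (N : ℕ) (a b : ℕ → ℂ) : Prop :=
  ∀ s : ℤ, s ≠ 0 → aauto N a s + aauto N b s = 0

/-- Binary representation of `i` as a `ZMod 2`-valued vector of length `m`. -/
def bitsZ (m i : ℕ) : Fin m → ZMod 2 := fun j => if i.testBit j then 1 else 0

namespace DJaux


lemma zcases (z : ZMod 2) : z = 0 ∨ z = 1 := by revert z; decide

lemma chi_add (x y : ZMod 2) :
    ((-1:ℂ))^((x+y).val) = (-1:ℂ)^x.val * (-1:ℂ)^y.val := by
  have v0 : (0 : ZMod 2).val = 0 := rfl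
  have v1 : (1 : ZMod 2).val = 1 := rfl
  have v11 : ((1 : ZMod 2) + 1).val = 0 := rfl
  rcases zcases x with rfl|rfl <;> rcases zcases y with rfl|rfl <;>
    simp [v0, v1, v11]

lemma chi_ne_zero (x : ZMod 2) : ((-1:ℂ))^x.val ≠ 0 := by
  apply pow_ne_zero; norm_num

lemma chi_flip (x : ZMod 2) : ((-1:ℂ))^((x+1).val) = -((-1:ℂ)^x.val) := by
  have v1 : (1 : ZMod 2).val = 1 := rfl
  rw [chi_add, v1]; norm_num

lemma xor_two_pow_of_false : ∀ (q n : ℕ), n.testBit q = false → n ^^^ 2^q = n + 2^q := by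
  intro q
  induction q with
  | zero =>
    intro n h
    have hn : n % 2 = 0 := by
      rcases Nat.mod_two_eq_zero_or_one n with h'|h'
      · exact h'
      · exfalso; rw [Nat.testBit_zero] at h; simp at h; omega
    have h2 : Nat.bit false (n/2) = n := by rw [Nat.bit_val]; simp only [Bool.toNat_false]; omega
    have h3 : (2:ℕ)^0 = Nat.bit true 0 := rfl
    rw [← h2, h3, Nat.xor_bit]
    simp [Nat.bit_val]
  | succ q ih =>
    intro n h
    have h2 : Nat.bit (n.testBit 0) (n/2) = n := by
      have := Nat.bit_testBit_zero_shiftRight_one n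
      simpa [Nat.shiftRight_one] using this
    have hb : (n/2).testBit q = false := by
      rw [← Nat.testBit_succ]
      have : n >>> 1 = n / 2 := Nat.shiftRight_one n
      rw [← Nat.testBit_div_two] at *
      exact h
    have h3 : (2:ℕ)^(q+1) = Nat.bit false (2^q) := by
      rw [Nat.bit_val]; simp; ring
    rw [← h2, h3, Nat.xor_bit, ih _ hb]
    rcases n.testBit 0 with _|_ <;> simp [Nat.bit_val] <;> ring

lemma flip_delta {q k j : ℕ} (h : k.testBit q = j.testBit q) :
    ((k ^^^ 2^q : ℕ) : ℤ) - (k:ℤ) = ((j ^^^ 2^q : ℕ) : ℤ) - (j:ℤ) := by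
  have key : ∀ n : ℕ, n.testBit q = true → ((n ^^^ 2^q : ℕ) : ℤ) - n = -(2^q : ℕ) := by
    intro n hn
    have hb : (n ^^^ 2^q).testBit q = false := by
      simp [Nat.testBit_xor, hn, Nat.testBit_two_pow]
    have := xor_two_pow_of_false q (n ^^^ 2^q) hb
    rw [Nat.xor_xor_cancel_right] at this
    omega
  have key2 : ∀ n : ℕ, n.testBit q = false → ((n ^^^ 2^q : ℕ) : ℤ) - n = (2^q : ℕ) := by
    intro n hn
    have := xor_two_pow_of_false q n hn
    omega
  cases hk : k.testBit q with
  | false => rw [key2 k hk, key2 j (by rw [← h, hk])]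
  | true => rw [key k hk, key j (by rw [← h, hk])]


lemma exists_diff {m k j : ℕ} (hk : k < 2^m) (hj : j < 2^m) (hne : k ≠ j) :
    ∃ p, p < m ∧ k.testBit p ≠ j.testBit p := by
  by_contra hcon
  push_neg at hcon
  apply hne
  apply Nat.eq_of_testBit_eq
  intro p
  by_cases hp : p < m
  · exact hcon p hp
  · have h1 : k < 2^p := lt_of_lt_of_le hk (Nat.pow_le_pow_right (by norm_num) (by omega))
    have h2 : j < 2^p := lt_of_lt_of_le hj (Nat.pow_le_pow_right (by norm_num) (by omega))
    rw [Nat.testBit_eq_false_of_lt h1, Nat.testBit_eq_false_of_lt h2]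



lemma testBit_flip (n q p : ℕ) :
    (n ^^^ 2^q).testBit p = ((n.testBit p) ^^ decide (q = p)) := by
  simp [Nat.testBit_xor, Nat.testBit_two_pow]

lemma bits_flip (m n : ℕ) (q : Fin m) :
    bitsZ m (n ^^^ 2^(q:ℕ)) = fun α => bitsZ m n α + (if α = q then 1 else 0) := by
  funext α
  simp only [bitsZ, testBit_flip]
  by_cases h : α = q
  · subst h
    cases hb : n.testBit (α:ℕ) <;> simp [hb] <;> decide
  · have hv : ¬ ((q:ℕ) = (α:ℕ)) := fun hc => h (Fin.ext hc.symm)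
    rw [decide_eq_false hv, if_neg h]
    simp

lemma quad_flip (g : ℕ → ZMod 2) (M tn : ℕ) (h : tn < M) :
    ∑ p ∈ Finset.range M, (g p + (if p = tn then 1 else 0)) * (g (p+1) + (if p+1 = tn then 1 else 0))
      = (∑ p ∈ Finset.range M, g p * g (p+1)) + g (tn+1)
        + (if 1 ≤ tn then g (tn-1) else 0) := by
  have expand : ∀ p, (g p + (if p = tn then 1 else 0)) * (g (p+1) + (if p+1 = tn then 1 else 0))
      = g p * g (p+1) + ((if p = tn then g (p+1) else 0) + (if p+1 = tn then g p else 0)) := by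
    intro p
    by_cases h1 : p = tn <;> by_cases h2 : p+1 = tn
    · omega
    · simp [h1, h2]; ring
    · simp [h1, h2]; ring
    · simp [h1, h2]
  have hS1 : (∑ p ∈ Finset.range M, if p = tn then g (p+1) else 0) = g (tn+1) := by
    rw [Finset.sum_ite_eq' (Finset.range M) tn (fun p => g (p+1)),
      if_pos (Finset.mem_range.mpr h)]
  have hS2 : (∑ p ∈ Finset.range M, if p + 1 = tn then g p else 0)
      = (if 1 ≤ tn then g (tn-1) else 0) := by
    by_cases h1 : 1 ≤ tn
    · rw [if_pos h1]
      have heq : ∀ p, (if p + 1 = tn then g p else 0) = (if p = tn - 1 then g p else 0) := by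
        intro p; congr 1; simp only [eq_iff_iff]; omega
      rw [Finset.sum_congr rfl (fun p _ => heq p),
        Finset.sum_ite_eq' (Finset.range M) (tn-1) g, if_pos (Finset.mem_range.mpr (by omega))]
    · rw [if_neg h1]
      apply Finset.sum_eq_zero
      intro p _
      rw [if_neg (by omega)]
  rw [Finset.sum_congr rfl (fun p _ => expand p), Finset.sum_add_distrib,
    Finset.sum_add_distrib, hS1, hS2]
  ring

lemma flipF (m : ℕ) (hm : 2 ≤ m) (hmm : m - 1 + 1 = m)
    (π : Equiv.Perm (Fin m)) (c : Fin m → ZMod 2) (c' : ZMod 2)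
    (f : (Fin m → ZMod 2) → ZMod 2)
    (hf : ∀ y : Fin m → ZMod 2,
      f y = (∑ α : Fin (m - 1),
              y (π (Fin.cast hmm α.castSucc)) * y (π (Fin.cast hmm α.succ))) +
            (∑ α : Fin m, c α * y α) + c')
    (t : Fin m) (ht : (t:ℕ) < m - 1) (n : ℕ) :
    f (bitsZ m (n ^^^ 2^((π t : ℕ)))) =
      f (bitsZ m n) + c (π t) + bitsZ m n (π ⟨(t:ℕ)+1, by omega⟩)
        + (if 1 ≤ (t:ℕ) then bitsZ m n (π ⟨(t:ℕ)-1, by omega⟩) else 0) := by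
  set y := bitsZ m n with hy
  set y' : Fin m → ZMod 2 := fun α => y α + (if α = π t then 1 else 0) with hy2
  have hy' : bitsZ m (n ^^^ 2^((π t : ℕ))) = y' := bits_flip m n (π t)
  set Gz : (Fin m → ZMod 2) → ℕ → ZMod 2 :=
    fun z p => if h : p < m then z (π ⟨p, h⟩) else 0 with hGz
  have conv : ∀ z : Fin m → ZMod 2,
      (∑ α : Fin (m-1), z (π (Fin.cast hmm α.castSucc)) * z (π (Fin.cast hmm α.succ)))
        = ∑ p ∈ Finset.range (m-1), Gz z p * Gz z (p+1) := by
    intro z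
    rw [← Fin.sum_univ_eq_sum_range (fun p => Gz z p * Gz z (p+1)) (m-1)]
    refine Finset.sum_congr rfl fun α _ => ?_
    have h1 : (α:ℕ) < m := by have := α.isLt; omega
    have h2 : (α:ℕ)+1 < m := by have := α.isLt; omega
    simp only [hGz, dif_pos h1, dif_pos h2]
    congr 2 <;> apply Fin.ext <;> simp
  have hG' : ∀ p, Gz y' p = Gz y p + (if p = (t:ℕ) then 1 else 0) := by
    intro p
    by_cases h : p < m
    · simp only [hGz, hy2, dif_pos h]
      congr 1
      by_cases h2 : p = (t:ℕ)
      · rw [if_pos (by rw [Equiv.apply_eq_iff_eq]; exact Fin.ext h2), if_pos h2]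
      · rw [if_neg (by rw [Equiv.apply_eq_iff_eq]; exact fun hc => h2 (congrArg Fin.val hc)),
          if_neg h2]
    · have h2 : ¬ p = (t:ℕ) := by have := t.isLt; omega
      simp [hGz, dif_neg h, h2]
  have hlin : (∑ α : Fin m, c α * y' α) = (∑ α : Fin m, c α * y α) + c (π t) := by
    have hpt : ∀ α : Fin m, c α * y' α = c α * y α + (if α = π t then c α else 0) := by
      intro α
      by_cases h : α = π t <;> simp [hy2, h] <;> ring
    rw [Finset.sum_congr rfl (fun α _ => hpt α), Finset.sum_add_distrib,
      Finset.sum_ite_eq' Finset.univ (π t) c, if_pos (Finset.mem_univ _)]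
  rw [hy', hf y', hf y, hlin, conv y', conv y]
  simp only [hG']
  rw [quad_flip (Gz y) (m-1) (t:ℕ) ht]
  have e1 : Gz y ((t:ℕ)+1) = y (π ⟨(t:ℕ)+1, by omega⟩) := by
    simp only [hGz]; rw [dif_pos (by omega : (t:ℕ)+1 < m)]
  have e2 : (if 1 ≤ (t:ℕ) then Gz y ((t:ℕ)-1) else 0)
      = (if 1 ≤ (t:ℕ) then y (π ⟨(t:ℕ)-1, by omega⟩) else 0) := by
    by_cases h : 1 ≤ (t:ℕ)
    · rw [if_pos h, if_pos h]
      simp only [hGz]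
      rw [dif_pos (by omega : (t:ℕ)-1 < m)]
    · rw [if_neg h, if_neg h]
  rw [e1, e2]
  ring


/-- indices where the bits of `k` and `k+s` differ (composed with `π`). -/
def Atab (m : ℕ) (π : Equiv.Perm (Fin m)) (s : ℤ) (k : ℕ) : Finset (Fin m) :=
  Finset.univ.filter (fun α => ¬ (k.testBit (π α) = (((k:ℤ)+s).toNat).testBit (π α)))

def alpha0 (m : ℕ) (hm0 : 0 < m) (π : Equiv.Perm (Fin m)) (s : ℤ) (k : ℕ) : Fin m :=
  if h : (Atab m π s k).Nonempty then (Atab m π s k).min' h else ⟨0, hm0⟩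

def tIdx (m : ℕ) (hm0 : 0 < m) (π : Equiv.Perm (Fin m)) (s : ℤ) (k : ℕ) : Fin m :=
  ⟨((alpha0 m hm0 π s k : ℕ)) - 1, by have := (alpha0 m hm0 π s k).isLt; omega⟩

def qpos (m : ℕ) (hm0 : 0 < m) (π : Equiv.Perm (Fin m)) (s : ℤ) (k : ℕ) : ℕ :=
  ((π (tIdx m hm0 π s k) : Fin m) : ℕ)

lemma zadd_self (z : ZMod 2) : z + z = 0 := by revert z; decide

lemma bool_bne_iff : ∀ x y d : Bool, (¬ (x ^^ d) = (y ^^ d)) ↔ ¬ x = y := by decide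

set_option maxHeartbeats 1000000 in
lemma master (m : ℕ) (hm : 2 ≤ m) (hm0 : 0 < m) (hmm : m - 1 + 1 = m)
    (π : Equiv.Perm (Fin m)) (c : Fin m → ZMod 2) (c' : ZMod 2)
    (f : (Fin m → ZMod 2) → ZMod 2)
    (hf : ∀ y : Fin m → ZMod 2,
      f y = (∑ α : Fin (m - 1),
              y (π (Fin.cast hmm α.castSucc)) * y (π (Fin.cast hmm α.succ))) +
            (∑ α : Fin m, c α * y α) + c')
    (s : ℤ) (hs : s ≠ 0) (k : ℕ) (hk : k < 2^m)
    (hks0 : 0 ≤ (k:ℤ) + s) (hksN : (k:ℤ) + s < ((2^m : ℕ) : ℤ))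
    (hbit : k.testBit ((π ⟨0, hm0⟩ : Fin m) : ℕ)
      = (((k:ℤ)+s).toNat).testBit ((π ⟨0, hm0⟩ : Fin m) : ℕ)) :
    k ^^^ 2^(qpos m hm0 π s k) < 2^m ∧
    0 ≤ ((k ^^^ 2^(qpos m hm0 π s k) : ℕ) : ℤ) + s ∧
    ((k ^^^ 2^(qpos m hm0 π s k) : ℕ) : ℤ) + s < ((2^m : ℕ) : ℤ) ∧
    (((k ^^^ 2^(qpos m hm0 π s k) : ℕ) : ℤ) + s).toNat
      = ((k:ℤ)+s).toNat ^^^ 2^(qpos m hm0 π s k) ∧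
    (k ^^^ 2^(qpos m hm0 π s k)).testBit ((π ⟨0, hm0⟩ : Fin m) : ℕ)
      = (((k:ℤ)+s).toNat ^^^ 2^(qpos m hm0 π s k)).testBit ((π ⟨0, hm0⟩ : Fin m) : ℕ) ∧
    qpos m hm0 π s (k ^^^ 2^(qpos m hm0 π s k)) = qpos m hm0 π s k ∧
    f (bitsZ m (k ^^^ 2^(qpos m hm0 π s k)))
      + f (bitsZ m (((k:ℤ)+s).toNat ^^^ 2^(qpos m hm0 π s k)))
      = f (bitsZ m k) + f (bitsZ m (((k:ℤ)+s).toNat)) + 1 := by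
  set j : ℕ := ((k:ℤ)+s).toNat with hjdef
  have hj : (j:ℤ) = (k:ℤ) + s := Int.toNat_of_nonneg hks0
  have hjlt : j < 2^m := by
    have h1 : (j:ℤ) < ((2^m : ℕ) : ℤ) := by rw [hj]; exact hksN
    exact_mod_cast h1
  have hkj : k ≠ j := by
    intro he
    apply hs
    omega
  -- differing bit exists
  have hAne : (Atab m π s k).Nonempty := by
    obtain ⟨p, hp, hne⟩ := exists_diff hk hjlt hkj
    refine ⟨π.symm ⟨p, hp⟩, ?_⟩
    simp only [Atab, Finset.mem_filter, Finset.mem_univ, true_and, Equiv.apply_symm_apply,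
      ← hjdef]
    exact hne
  set α₀ : Fin m := alpha0 m hm0 π s k with hα₀def
  have halpha : α₀ = (Atab m π s k).min' hAne := by
    rw [hα₀def, alpha0, dif_pos hAne]
  have hmem : α₀ ∈ Atab m π s k := by rw [halpha]; exact Finset.min'_mem _ _
  have hd2 : ¬ (k.testBit ((π α₀ : Fin m) : ℕ) = j.testBit ((π α₀ : Fin m) : ℕ)) := by
    have := hmem
    simp only [Atab, Finset.mem_filter, Finset.mem_univ, true_and, ← hjdef] at this
    exact this
  have hne0 : (α₀ : ℕ) ≠ 0 := by
    intro h0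
    apply hd2
    have : α₀ = ⟨0, hm0⟩ := Fin.ext h0
    rw [this]
    exact hbit
  have hminimal : ∀ β : Fin m, (β:ℕ) < (α₀:ℕ) →
      k.testBit ((π β : Fin m) : ℕ) = j.testBit ((π β : Fin m) : ℕ) := by
    intro β hβ
    by_contra hc
    have hβmem : β ∈ Atab m π s k := by
      simp only [Atab, Finset.mem_filter, Finset.mem_univ, true_and, ← hjdef]
      exact hc
    have := Finset.min'_le (Atab m π s k) β hβmem
    rw [← halpha] at this
    rw [Fin.le_def] at this
    omega
  set t : Fin m := tIdx m hm0 π s k with htdef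
  have htval : (t : ℕ) = (α₀ : ℕ) - 1 := rfl
  have hq : qpos m hm0 π s k = ((π t : Fin m) : ℕ) := rfl
  set q : ℕ := qpos m hm0 π s k with hqdef
  have ht_lt : (t : ℕ) < m - 1 := by
    have := α₀.isLt
    omega
  have hqm : q < m := by rw [hq]; exact (π t).isLt
  have hqbit : k.testBit q = j.testBit q := by
    rw [hq]
    exact hminimal t (by omega)
  have h2pow : (2:ℕ)^q < 2^m := Nat.pow_lt_pow_right (by norm_num) hqm
  have hklt' : k ^^^ 2^q < 2^m := Nat.xor_lt_two_pow hk h2pow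
  have hjlt' : j ^^^ 2^q < 2^m := Nat.xor_lt_two_pow hjlt h2pow
  have hd := flip_delta (q := q) hqbit
  have hgs : ((k ^^^ 2^q : ℕ) : ℤ) + s = ((j ^^^ 2^q : ℕ) : ℤ) := by omega
  have h2 : 0 ≤ ((k ^^^ 2^q : ℕ) : ℤ) + s := by omega
  have h3 : ((k ^^^ 2^q : ℕ) : ℤ) + s < ((2^m : ℕ) : ℤ) := by
    have : ((j ^^^ 2^q : ℕ) : ℤ) < ((2^m : ℕ) : ℤ) := by exact_mod_cast hjlt'
    omega
  have h4 : (((k ^^^ 2^q : ℕ) : ℤ) + s).toNat = j ^^^ 2^q := by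
    rw [hgs, Int.toNat_natCast]
  have h5 : (k ^^^ 2^q).testBit ((π ⟨0, hm0⟩ : Fin m) : ℕ)
      = (j ^^^ 2^q).testBit ((π ⟨0, hm0⟩ : Fin m) : ℕ) := by
    rw [testBit_flip, testBit_flip, hbit]
  have hAeq : Atab m π s (k ^^^ 2^q) = Atab m π s k := by
    ext α
    simp only [Atab, Finset.mem_filter, Finset.mem_univ, true_and]
    rw [h4, testBit_flip, testBit_flip]
    exact bool_bne_iff _ _ _
  have halpha' : alpha0 m hm0 π s (k ^^^ 2^q) = α₀ := by
    rw [hα₀def]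
    unfold alpha0
    simp only [hAeq]
  have h6 : qpos m hm0 π s (k ^^^ 2^q) = q := by
    have htt : tIdx m hm0 π s (k ^^^ 2^q) = tIdx m hm0 π s k := by
      apply Fin.ext
      show (alpha0 m hm0 π s (k ^^^ 2^q) : ℕ) - 1 = (alpha0 m hm0 π s k : ℕ) - 1
      rw [halpha', hα₀def]
    have hq2 : qpos m hm0 π s (k ^^^ 2^q) = ((π (tIdx m hm0 π s (k ^^^ 2^q)) : Fin m) : ℕ) := rfl
    rw [hq2, htt]
    exact hq.symm
  -- the sign computation
  have e1 := flipF m hm hmm π c c' f hf t ht_lt k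
  have e2 := flipF m hm hmm π c c' f hf t ht_lt j
  have hidx : (⟨(t:ℕ)+1, by omega⟩ : Fin m) = α₀ := by
    apply Fin.ext
    simp only [htval]
    omega
  have hval1 : bitsZ m k (π ⟨(t:ℕ)+1, by omega⟩) + bitsZ m j (π ⟨(t:ℕ)+1, by omega⟩)
      = 1 := by
    rw [hidx]
    simp only [bitsZ]
    cases hx : k.testBit ((π α₀ : Fin m) : ℕ) <;>
      cases hy : j.testBit ((π α₀ : Fin m) : ℕ)
    · exact absurd (by rw [hx, hy]) hd2
    · decide
    · decide
    · exact absurd (by rw [hx, hy]) hd2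
  have hval2 : (if 1 ≤ (t:ℕ) then bitsZ m k (π ⟨(t:ℕ)-1, by have := t.isLt; omega⟩) else 0)
      + (if 1 ≤ (t:ℕ) then bitsZ m j (π ⟨(t:ℕ)-1, by have := t.isLt; omega⟩) else 0) = 0 := by
    have heq := hminimal ⟨(t:ℕ)-1, by have := t.isLt; omega⟩
      (by show (t:ℕ)-1 < (α₀:ℕ); omega)
    have e : bitsZ m k (π ⟨(t:ℕ)-1, by have := t.isLt; omega⟩)
        = bitsZ m j (π ⟨(t:ℕ)-1, by have := t.isLt; omega⟩) := by
      unfold bitsZ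
      rw [heq]
    rw [e]
    exact zadd_self _
  have hcc : c (π t) + c (π t) = 0 := zadd_self _
  refine ⟨hklt', h2, h3, h4, h5, h6, ?_⟩
  rw [hq]
  rw [e1, e2]
  linear_combination hval1 + hval2 + hcc

lemma chi_sq (z : ZMod 2) : ((-1:ℂ))^z.val * (-1:ℂ)^z.val = 1 := by
  have h : ∀ w : ZMod 2, w = 0 ∨ w = 1 := by decide
  have v1 : (1 : ZMod 2).val = 1 := rfl
  rcases h z with rfl|rfl
  · norm_num
  · rw [v1]; norm_num

end DJaux

open DJaux in
set_option maxHeartbeats 1000000 in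
/-- Davis–Jedwab Golay pair construction, binary case. -/
theorem davis_jedwab_binary (m : ℕ) (hm : 2 ≤ m) (hmm : m - 1 + 1 = m)
    (π : Equiv.Perm (Fin m)) (c : Fin m → ZMod 2) (c' : ZMod 2)
    (f : (Fin m → ZMod 2) → ZMod 2)
    (hf : ∀ y : Fin m → ZMod 2,
      f y = (∑ α : Fin (m - 1),
              y (π (Fin.cast hmm α.castSucc)) * y (π (Fin.cast hmm α.succ))) +
            (∑ α : Fin m, c α * y α) + c')
    (a b : ℕ → ℂ)
    (hA : ∀ i, a i = (-1 : ℂ) ^ (f (bitsZ m i)).val)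
    (hB : ∀ i, b i = (-1 : ℂ) ^ (f (bitsZ m i) + bitsZ m i (π ⟨0, by omega⟩)).val) :
    IsGCP (2 ^ m) a b := by
  intro s hs
  have hm0 : 0 < m := by omega
  have hstar : ∀ n : ℕ, (starRingEnd ℂ) ((-1:ℂ)^n) = (-1:ℂ)^n := by
    intro n; rw [map_pow, map_neg, map_one]
  have hstara : ∀ i, (starRingEnd ℂ) (a i) = a i := by
    intro i; rw [hA i]; exact hstar _
  have hstarb : ∀ i, (starRingEnd ℂ) (b i) = b i := by
    intro i; rw [hB i]; exact hstar _
  -- pointwise description inside the admissible window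
  have hterm : ∀ k : ℕ, k < 2^m → (0 ≤ (k:ℤ)+s ∧ (k:ℤ)+s < ((2^m : ℕ):ℤ)) →
      extSeq (2^m) a ↑k * (starRingEnd ℂ) (extSeq (2^m) a (↑k+s))
        + extSeq (2^m) b ↑k * (starRingEnd ℂ) (extSeq (2^m) b (↑k+s))
      = a k * a (((k:ℤ)+s).toNat) + b k * b (((k:ℤ)+s).toNat) := by
    intro k hk hc
    have e1 : extSeq (2^m) a ↑k = a k := by
      simp only [extSeq]
      rw [if_pos ⟨Int.natCast_nonneg k, by exact_mod_cast hk⟩, Int.toNat_natCast]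
    have e2 : extSeq (2^m) b ↑k = b k := by
      simp only [extSeq]
      rw [if_pos ⟨Int.natCast_nonneg k, by exact_mod_cast hk⟩, Int.toNat_natCast]
    have e3 : extSeq (2^m) a (↑k+s) = a (((k:ℤ)+s).toNat) := by
      simp only [extSeq]; rw [if_pos hc]
    have e4 : extSeq (2^m) b (↑k+s) = b (((k:ℤ)+s).toNat) := by
      simp only [extSeq]; rw [if_pos hc]
    rw [e1, e2, e3, e4, hstara, hstarb]
  have hT0 : ∀ k j : ℕ,
      ¬ (k.testBit ((π ⟨0, hm0⟩ : Fin m) : ℕ) = j.testBit ((π ⟨0, hm0⟩ : Fin m) : ℕ)) →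
      a k * a j + b k * b j = 0 := by
    intro k j hb
    rw [hA k, hA j, hB k, hB j, chi_add, chi_add]
    have hβk : ∀ i : ℕ, bitsZ m i (π ⟨0, hm0⟩) = if i.testBit ((π ⟨0, hm0⟩ : Fin m) : ℕ) then 1 else 0 :=
      fun i => rfl
    cases hx : k.testBit ((π ⟨0, hm0⟩ : Fin m) : ℕ) <;>
      cases hy : j.testBit ((π ⟨0, hm0⟩ : Fin m) : ℕ)
    · exact absurd (by rw [hx, hy]) hb
    · have v0 : ((if (false = true) then (1:ZMod 2) else 0)).val = 0 := rfl
      have v1 : ((if (true = true) then (1:ZMod 2) else 0)).val = 1 := rfl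
      rw [hβk, hβk, hx, hy, v0, v1]; ring
    · have v0 : ((if (false = true) then (1:ZMod 2) else 0)).val = 0 := rfl
      have v1 : ((if (true = true) then (1:ZMod 2) else 0)).val = 1 := rfl
      rw [hβk, hβk, hx, hy, v0, v1]; ring
    · exact absurd (by rw [hx, hy]) hb
  have hT2 : ∀ k j : ℕ,
      (k.testBit ((π ⟨0, hm0⟩ : Fin m) : ℕ) = j.testBit ((π ⟨0, hm0⟩ : Fin m) : ℕ)) →
      a k * a j + b k * b j
        = 2 * ((-1:ℂ)^(f (bitsZ m k)).val * (-1:ℂ)^(f (bitsZ m j)).val) := by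
    intro k j hb
    rw [hA k, hA j, hB k, hB j, chi_add, chi_add]
    have hβ : bitsZ m k (π ⟨0, hm0⟩) = bitsZ m j (π ⟨0, hm0⟩) := by
      unfold bitsZ; rw [hb]
    rw [hβ]
    have hsq := chi_sq (bitsZ m j (π ⟨0, hm0⟩))
    linear_combination ((-1:ℂ)^(f (bitsZ m k)).val * (-1:ℂ)^(f (bitsZ m j)).val) * hsq
  -- the combined correlation sum
  show aauto (2^m) a s + aauto (2^m) b s = 0
  rw [aauto, aauto, acorr, acorr, ← Finset.sum_add_distrib]
  set P : ℕ → Prop := fun k =>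
    (0 ≤ (k:ℤ)+s ∧ (k:ℤ)+s < ((2^m : ℕ):ℤ)) ∧
      (k.testBit ((π ⟨0, hm0⟩ : Fin m) : ℕ)
        = ((((k:ℤ)+s).toNat).testBit ((π ⟨0, hm0⟩ : Fin m) : ℕ))) with hPdef
  have hvan : ∀ k ∈ Finset.range (2^m),
      (extSeq (2^m) a ↑k * (starRingEnd ℂ) (extSeq (2^m) a (↑k+s))
        + extSeq (2^m) b ↑k * (starRingEnd ℂ) (extSeq (2^m) b (↑k+s))) ≠ 0 → P k := by
    intro k hkr hne
    have hk : k < 2^m := Finset.mem_range.mp hkr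
    by_cases h1 : 0 ≤ (k:ℤ)+s ∧ (k:ℤ)+s < ((2^m : ℕ):ℤ)
    · refine ⟨h1, ?_⟩
      by_contra hb2
      exact hne (by rw [hterm k hk h1]; exact hT0 k _ hb2)
    · exfalso
      apply hne
      have z3 : extSeq (2^m) a (↑k+s) = 0 := by simp only [extSeq]; rw [if_neg h1]
      have z4 : extSeq (2^m) b (↑k+s) = 0 := by simp only [extSeq]; rw [if_neg h1]
      rw [z3, z4]
      simp
  rw [← Finset.sum_filter_of_ne hvan]
  have hrw : ∀ k ∈ (Finset.range (2^m)).filter P,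
      (extSeq (2^m) a ↑k * (starRingEnd ℂ) (extSeq (2^m) a (↑k+s))
        + extSeq (2^m) b ↑k * (starRingEnd ℂ) (extSeq (2^m) b (↑k+s)))
      = 2 * ((-1:ℂ)^(f (bitsZ m k)).val
          * (-1:ℂ)^(f (bitsZ m (((k:ℤ)+s).toNat))).val) := by
    intro k hk
    rw [Finset.mem_filter, Finset.mem_range] at hk
    rw [hterm k hk.1 hk.2.1]
    exact hT2 k _ hk.2.2
  rw [Finset.sum_congr rfl hrw]
  -- involution
  apply Finset.sum_involution (fun k _ => k ^^^ 2^(qpos m hm0 π s k))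
  · -- pairs sum to zero
    intro k hk
    rw [Finset.mem_filter, Finset.mem_range] at hk
    obtain ⟨m1, m2, m3, m4, m5, m6, m7⟩ :=
      master m hm hm0 hmm π c c' f hf s hs k hk.1 hk.2.1.1 hk.2.1.2 hk.2.2
    rw [m4]
    have key : ((-1:ℂ)^(f (bitsZ m (k ^^^ 2^(qpos m hm0 π s k)))).val
          * (-1:ℂ)^(f (bitsZ m (((k:ℤ)+s).toNat ^^^ 2^(qpos m hm0 π s k)))).val)
        = -(((-1:ℂ)^(f (bitsZ m k)).val
          * (-1:ℂ)^(f (bitsZ m (((k:ℤ)+s).toNat))).val)) := by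
      rw [← chi_add, m7, chi_flip, chi_add]
    linear_combination 2 * key
  · -- g ≠ id where value nonzero (always)
    intro k hk _
    intro heq
    have h0 : k ^^^ 2^(qpos m hm0 π s k) = k ^^^ 0 := by rw [Nat.xor_zero]; exact heq
    have h1 : (2:ℕ)^(qpos m hm0 π s k) = 0 := Nat.xor_right_injective h0
    exact absurd h1 (by positivity)
  · -- g maps into the set
    intro k hk
    rw [Finset.mem_filter, Finset.mem_range] at hk ⊢
    obtain ⟨m1, m2, m3, m4, m5, m6, m7⟩ :=
      master m hm hm0 hmm π c c' f hf s hs k hk.1 hk.2.1.1 hk.2.1.2 hk.2.2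
    refine ⟨m1, ⟨m2, m3⟩, ?_⟩
    rw [m4]
    exact m5
  · -- involutive
    intro k hk
    rw [Finset.mem_filter, Finset.mem_range] at hk
    obtain ⟨m1, m2, m3, m4, m5, m6, m7⟩ :=
      master m hm hm0 hmm π c c' f hf s hs k hk.1 hk.2.1.1 hk.2.1.2 hk.2.2
    simp only [m6]
    exact Nat.xor_xor_cancel_right _ _
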